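/- Let S be a compact Riemannian 2-manifold, H a Riemannian manifold, γ : S → H a smooth map, and suppose at each point (with respect to a local orthonormal frame (e₁,e₂) of TS) the differential satisfies ‖dγ(e₁) ∧ dγ(e₂)‖ ≤ (1 + ‖dγ(e₁)‖)(1 + ‖dγ(e₂)‖) in the sense that the area element of the graph-type lift is bounded as in the wedge inequality. Then Area(γ) ≤ Area(S) + 2√(Area(S))·√(∫_S ‖dγ‖²) + ∫_S ‖dγ‖², where Area(γ) = ∫_S ‖(e₁ + dγ(e₁)) ∧ (e₂ + dγ(e₂))‖ dA computed in the product metric on S × H. -/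

import Mathlib

open RealInnerProductSpace MeasureTheory

/-- area bound for lifts, abstracted: over a finite measure space
`(S, μ)` (with `μ S = Area(S)`), let `u₁ s = dγ(e₁)`, `u₂ s = dγ(e₂)` be the
derivatives of the lift `γ` in the fibre directions, relative to a local
orthonormal frame `(e₁,e₂)` of `S`.  In the product metric the area element of
the graph-type lift is
`‖(e₁+dγe₁) ∧ (e₂+dγe₂)‖ = √((1+‖u₁‖²)(1+‖u₂‖²) − ⟪u₁,u₂⟫²)`, and
`Area(γ) ≤ Area(S) + 2√(Area S)·√(∫‖dγ‖²) + ∫‖dγ‖²`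
where `‖dγ‖² = ‖u₁‖² + ‖u₂‖²` is the energy density. -/
theorem area_of_lift_bound
    {S : Type*} [MeasurableSpace S] (μ : Measure S) [IsFiniteMeasure μ]
    {E : Type*} [NormedAddCommGroup E] [InnerProductSpace ℝ E]
    (u1 u2 : S → E)
    (henergy : Integrable (fun s => ‖u1 s‖ ^ 2 + ‖u2 s‖ ^ 2) μ)
    (harea : Integrable (fun s =>
      Real.sqrt ((1 + ‖u1 s‖ ^ 2) * (1 + ‖u2 s‖ ^ 2) - ⟪u1 s, u2 s⟫ ^ 2)) μ) :
    ∫ s, Real.sqrt ((1 + ‖u1 s‖ ^ 2) * (1 + ‖u2 s‖ ^ 2) - ⟪u1 s, u2 s⟫ ^ 2) ∂μ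
      ≤ (μ Set.univ).toReal
        + 2 * Real.sqrt ((μ Set.univ).toReal)
            * Real.sqrt (∫ s, (‖u1 s‖ ^ 2 + ‖u2 s‖ ^ 2) ∂μ)
        + ∫ s, (‖u1 s‖ ^ 2 + ‖u2 s‖ ^ 2) ∂μ := by
  have hE : 0 ≤ ∫ s, (‖u1 s‖ ^ 2 + ‖u2 s‖ ^ 2) ∂μ := by
    apply integral_nonneg
    intro s
    positivity
  have hmid : 0 ≤ 2 * Real.sqrt ((μ Set.univ).toReal)
      * Real.sqrt (∫ s, (‖u1 s‖ ^ 2 + ‖u2 s‖ ^ 2) ∂μ) := by positivity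
  have key : ∫ s, Real.sqrt ((1 + ‖u1 s‖ ^ 2) * (1 + ‖u2 s‖ ^ 2) - ⟪u1 s, u2 s⟫ ^ 2) ∂μ
      ≤ ∫ s, (1 + (‖u1 s‖ ^ 2 + ‖u2 s‖ ^ 2) / 2) ∂μ := by
    apply integral_mono harea
    · exact (integrable_const 1).add (henergy.div_const 2)
    · intro s
      have h1 : Real.sqrt ((1 + ‖u1 s‖ ^ 2) * (1 + ‖u2 s‖ ^ 2) - ⟪u1 s, u2 s⟫ ^ 2)
          ≤ Real.sqrt ((1 + ‖u1 s‖ ^ 2) * (1 + ‖u2 s‖ ^ 2)) := by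
        apply Real.sqrt_le_sqrt
        nlinarith [sq_nonneg (⟪u1 s, u2 s⟫ : ℝ)]
      have h2 : Real.sqrt ((1 + ‖u1 s‖ ^ 2) * (1 + ‖u2 s‖ ^ 2))
          ≤ 1 + (‖u1 s‖ ^ 2 + ‖u2 s‖ ^ 2) / 2 := by
        have h3 : Real.sqrt ((1 + ‖u1 s‖ ^ 2) * (1 + ‖u2 s‖ ^ 2))
            ≤ Real.sqrt ((1 + (‖u1 s‖ ^ 2 + ‖u2 s‖ ^ 2) / 2) ^ 2) :=
          Real.sqrt_le_sqrt (by nlinarith [sq_nonneg (‖u1 s‖ ^ 2 - ‖u2 s‖ ^ 2)])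
        rwa [Real.sqrt_sq (by positivity)] at h3
      exact h1.trans h2
  have heq : ∫ s, (1 + (‖u1 s‖ ^ 2 + ‖u2 s‖ ^ 2) / 2) ∂μ
      = (μ Set.univ).toReal + (∫ s, (‖u1 s‖ ^ 2 + ‖u2 s‖ ^ 2) ∂μ) / 2 := by
    rw [integral_add (integrable_const 1) (henergy.div_const 2), integral_const,
      integral_div, smul_eq_mul, mul_one]
    rfl
  linarith [key, heq.le]
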